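/- Fix α > 0 and let f be the function determined by 1/f(z) = (1/(2π))·[ log((z+α)/z) + (2π−α)/(z+α) ] for z in the upper half-plane, extended continuously to the real axis near 0 from above, and write f(x) = u(x) + i·v(x) for real x < 0 near 0. Then u(x) = −2π/log|x| + O(1/log²|x|) as x → 0⁻. -/

import Mathlib

open Complex Filter Topology

/-- The Christoffel–Schwarz map `f` of the paper:
`1/f(z) = (1/(2π))·[log(z+α) − log z + (2π−α)/(z+α)]`, where `Complex.log`
is the branch with `log i = iπ/2` (the continuous extension to the real axis from above,
with `log((z+α)/z) = log(z+α) − log z` on the upper half-plane). -/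
noncomputable def fCS (α : ℝ) (z : ℂ) : ℂ :=
  2 * (Real.pi : ℂ) /
    (Complex.log (z + (α : ℂ)) - Complex.log z + ((2 * Real.pi - α : ℝ) : ℂ) / (z + (α : ℂ)))


lemma re_fCS (α x : ℝ) (hx : x < 0) (hxα : 0 < x + α) :
    (fCS α x).re = 2 * Real.pi * (Real.log (x+α) - Real.log |x| + (2*Real.pi - α)/(x+α)) /
      ((Real.log (x+α) - Real.log |x| + (2*Real.pi - α)/(x+α))^2 + Real.pi^2) := by
  have h1 : ((x:ℂ) + (α:ℂ)) = ((x+α : ℝ) : ℂ) := by push_cast; ring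
  have h2 : ((2 * Real.pi - α : ℝ) : ℂ) / ((x+α:ℝ):ℂ) = (((2*Real.pi - α)/(x+α) : ℝ) : ℂ) :=
    (Complex.ofReal_div _ _).symm
  rw [fCS, h1, h2, Complex.div_re]
  have hre : (Complex.log ((x+α:ℝ):ℂ) - Complex.log (x:ℂ) + (((2*Real.pi - α)/(x+α) : ℝ):ℂ)).re
      = Real.log (x+α) - Real.log |x| + (2*Real.pi - α)/(x+α) := by
    rw [Complex.add_re, Complex.sub_re, Complex.log_re, Complex.log_re, Complex.ofReal_re]
    simp only [Complex.norm_real, Real.norm_eq_abs]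
    rw [abs_of_pos hxα]
  have him : (Complex.log ((x+α:ℝ):ℂ) - Complex.log (x:ℂ) + (((2*Real.pi - α)/(x+α) : ℝ):ℂ)).im
      = -Real.pi := by
    rw [Complex.add_im, Complex.sub_im, Complex.log_im, Complex.log_im, Complex.ofReal_im,
      Complex.arg_ofReal_of_nonneg hxα.le, Complex.arg_ofReal_of_neg hx]
    ring
  rw [hre, him, Complex.normSq_apply, hre, him]
  simp
  ring
lemma key_bound (M L c : ℝ) (hM : 0 ≤ M) (hc : |c| ≤ M)
    (hL : L ≤ -(2*M + M^2 + Real.pi^2 + 1)) :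
    |2*Real.pi*(c - L)/((c - L)^2 + Real.pi^2) + 2*Real.pi/L|
      ≤ 8*Real.pi*(M+1) * |1/L^2| := by
  have hπ := Real.pi_pos
  have hLneg : L < 0 := by nlinarith [sq_nonneg M, sq_nonneg Real.pi]
  have hnegL : 0 < -L := by linarith
  have hLne : L ≠ 0 := ne_of_lt hLneg
  obtain ⟨hcM1, hcM2⟩ := abs_le.mp hc
  have hLM : 2*M + M^2 + Real.pi^2 + 1 ≤ -L := by linarith
  have hden : (0:ℝ) < (c - L)^2 + Real.pi^2 := by positivity
  have heq : 2*Real.pi*(c - L)/((c - L)^2 + Real.pi^2) + 2*Real.pi/L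
      = (2*Real.pi*(-c*L + c^2 + Real.pi^2)) / (L*((c - L)^2 + Real.pi^2)) := by
    field_simp
    ring
  rw [heq, abs_div]
  have hdenval : |L*((c - L)^2 + Real.pi^2)| = (-L)*((c - L)^2 + Real.pi^2) := by
    rw [abs_of_neg (by nlinarith : L*((c - L)^2 + Real.pi^2) < 0)]
    ring
  rw [hdenval]
  have hprod1 : c*(-L) ≤ M*(-L) := mul_le_mul_of_nonneg_right hcM2 hnegL.le
  have hprod2 : (-M)*(-L) ≤ c*(-L) := mul_le_mul_of_nonneg_right hcM1 hnegL.le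
  have hnum : |2*Real.pi*(-c*L + c^2 + Real.pi^2)| ≤ 2*Real.pi*(M+1)*(-L) := by
    have habs : |-c*L + c^2 + Real.pi^2| ≤ (M+1)*(-L) := by
      rw [abs_le]
      constructor <;> nlinarith [sq_nonneg (c - M), sq_nonneg (c + M)]
    calc |2*Real.pi*(-c*L + c^2 + Real.pi^2)|
        = 2*Real.pi * |-c*L + c^2 + Real.pi^2| := by
          rw [abs_mul, abs_of_pos (by positivity : (0:ℝ) < 2*Real.pi)]
      _ ≤ 2*Real.pi*((M+1)*(-L)) := by
          exact mul_le_mul_of_nonneg_left habs (by positivity)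
      _ = 2*Real.pi*(M+1)*(-L) := by ring
  have h1 : (-L)/2 ≤ c - L := by linarith [sq_nonneg M, sq_nonneg Real.pi]
  have h2 : (0:ℝ) ≤ (-L)/2 := by linarith
  have hsq : ((-L)/2)^2 ≤ (c - L)^2 := by nlinarith
  have hden2 : (-L)^3/4 ≤ (-L)*((c - L)^2 + Real.pi^2) := by nlinarith [sq_nonneg Real.pi]
  have hcube : (0:ℝ) < (-L)^3/4 := by positivity
  calc |2*Real.pi*(-c*L + c^2 + Real.pi^2)| / ((-L)*((c - L)^2 + Real.pi^2))
      ≤ (2*Real.pi*(M+1)*(-L)) / ((-L)^3/4) := by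
        apply div_le_div₀ (by positivity) hnum hcube hden2
    _ = 8*Real.pi*(M+1) * |1/L^2| := by
        rw [abs_of_pos (by positivity : (0:ℝ) < 1/L^2), div_eq_iff (ne_of_gt hcube)]
        field_simp
        ring

/-- `u(x) = −2π/log|x| + O(1/log²|x|)` as `x → 0⁻`. -/
theorem stmt4 (α : ℝ) (hα : 0 < α) :
    (fun x : ℝ => (fCS α (x : ℂ)).re - (-(2 * Real.pi) / Real.log |x|))
      =O[nhdsWithin 0 (Set.Iio (0 : ℝ))] (fun x : ℝ => 1 / (Real.log |x|) ^ 2) := by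
  set c : ℝ → ℝ := fun x => Real.log (x+α) + (2*Real.pi - α)/(x+α) with hc
  -- continuity of c at 0
  have hcont : ContinuousAt c 0 := by
    have h1 : ContinuousAt (fun x : ℝ => x + α) 0 := by fun_prop
    have hne : (0:ℝ) + α ≠ 0 := by linarith
    have h2 : ContinuousAt Real.log ((fun x : ℝ => x + α) 0) := Real.continuousAt_log hne
    exact (ContinuousAt.comp (f := fun x : ℝ => x + α) h2 h1).add
      (ContinuousAt.div (f := fun _ : ℝ => 2*Real.pi - α) (g := fun x : ℝ => x + α)
        continuousAt_const h1 hne)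
  set M : ℝ := |c 0| + 1 with hM
  have hM0 : 0 ≤ M := by positivity
  have hcM : ∀ᶠ x in nhdsWithin 0 (Set.Iio (0:ℝ)), |c x| ≤ M := by
    apply Filter.Eventually.filter_mono nhdsWithin_le_nhds
    have h := Metric.tendsto_nhds.mp hcont.tendsto 1 one_pos
    filter_upwards [h] with x hx
    rw [Real.dist_eq] at hx
    calc |c x| ≤ |c x - c 0| + |c 0| := by
          have := abs_sub_abs_le_abs_sub (c x) (c 0); linarith
      _ ≤ M := by rw [hM]; linarith
  -- log |x| → -∞
  have habs : Tendsto (fun x : ℝ => |x|) (nhdsWithin 0 (Set.Iio (0:ℝ)))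
      (nhdsWithin 0 (Set.Ioi (0:ℝ))) := by
    rw [tendsto_nhdsWithin_iff]
    constructor
    · exact (continuous_abs.tendsto' 0 0 abs_zero).mono_left nhdsWithin_le_nhds
    · filter_upwards [self_mem_nhdsWithin] with x (hx : x < 0)
      exact abs_pos.mpr (ne_of_lt hx)
  have hlog : Tendsto (fun x : ℝ => Real.log |x|) (nhdsWithin 0 (Set.Iio (0:ℝ))) atBot :=
    Real.tendsto_log_nhdsGT_zero.comp habs
  have hLev : ∀ᶠ x in nhdsWithin 0 (Set.Iio (0:ℝ)),
      Real.log |x| ≤ -(2*M + M^2 + Real.pi^2 + 1) := hlog.eventually_le_atBot _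
  have hsmall : ∀ᶠ x in nhdsWithin 0 (Set.Iio (0:ℝ)), |x| < α :=
    Filter.Eventually.filter_mono nhdsWithin_le_nhds (by
      have := Metric.ball_mem_nhds (0:ℝ) hα
      filter_upwards [this] with x hx
      simpa [Real.dist_eq] using hx)
  rw [Asymptotics.isBigO_iff]
  refine ⟨8*Real.pi*(M+1), ?_⟩
  filter_upwards [hcM, hLev, hsmall, self_mem_nhdsWithin] with x h1 h2 h3 (h4 : x < 0)
  have hxα : 0 < x + α := by
    rcases abs_lt.mp h3 with ⟨hl, _⟩
    linarith
  rw [re_fCS α x h4 hxα, Real.norm_eq_abs, Real.norm_eq_abs]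
  have harg : 2 * Real.pi * (Real.log (x+α) - Real.log |x| + (2*Real.pi - α)/(x+α)) /
        ((Real.log (x+α) - Real.log |x| + (2*Real.pi - α)/(x+α))^2 + Real.pi^2)
        - -(2 * Real.pi) / Real.log |x|
      = 2*Real.pi*(c x - Real.log |x|)/((c x - Real.log |x|)^2 + Real.pi^2)
        + 2*Real.pi/(Real.log |x|) := by
    rw [hc]
    ring_nf
  rw [harg]
  exact key_bound M (Real.log |x|) (c x) hM0 h1 h2
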